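/- Suppose t^n ≠ 1. Set V := (I - P·Y^{-1})^{-1} and W := (I - (I - P)·X^{-1})^{-1}, and let K be the 2m×m complex matrix with upper m×m block (t^{-n}·(Σ_{i=0}^{m-1} X^i)·X)·(I - P) + W·P and lower m×m block (-t^{-n}·(Σ_{i=0}^{n-1} Y^i)·Y)·(I - P) - V·(I - X^{-1})·W·P. Let ∂₁ be the m×2m matrix whose left m×m block is I - X^{-1} and whose right m×m block is I - Y^{-1}. Then the linear map ℂ^m → ℂ^{2m}, v ↦ K·v, is injective and its range equals the kernel of the linear map ℂ^{2m} → ℂ^m, w ↦ ∂₁·w. -/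

import Mathlib

open Matrix Finset

namespace Stmt12Aux

variable {m : ℕ} [NeZero m]

def shiftM (m : ℕ) [NeZero m] (r : ℕ) (f : Fin m → ℂ) : Matrix (Fin m) (Fin m) ℂ :=
  Matrix.of fun i j => if (j : ℕ) = ((i : ℕ) + r) % m then f i else 0

lemma mpos : 0 < m := Nat.pos_of_ne_zero (NeZero.ne m)

lemma diag_congr {f g : Fin m → ℂ} (h : ∀ i, f i = g i) :
    Matrix.diagonal f = Matrix.diagonal g := by
  ext i j; simp only [Matrix.diagonal_apply, h]

lemma diag_comm (f g : Fin m → ℂ) :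
    Matrix.diagonal f * Matrix.diagonal g = Matrix.diagonal g * Matrix.diagonal f := by
  rw [Matrix.diagonal_mul_diagonal, Matrix.diagonal_mul_diagonal]
  exact diag_congr fun i => mul_comm _ _

lemma diagonal_const (c : ℂ) :
    Matrix.diagonal (fun _ : Fin m => c) = c • (1 : Matrix (Fin m) (Fin m) ℂ) := by
  ext i j
  simp only [Matrix.diagonal_apply, Matrix.smul_apply, Matrix.one_apply, smul_eq_mul]
  split_ifs <;> simp

lemma smul_diag (c : ℂ) (f : Fin m → ℂ) :
    c • Matrix.diagonal f = Matrix.diagonal (fun i => c * f i) := by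
  ext i j
  simp only [Matrix.diagonal_apply, Matrix.smul_apply, smul_eq_mul]
  split_ifs <;> simp
lemma shiftM_mul (r s : ℕ) (f g : Fin m → ℂ) :
    shiftM m r f * shiftM m s g =
      shiftM m (r + s) (fun i => f i * g ⟨((i : ℕ) + r) % m, Nat.mod_lt _ mpos⟩) := by
  ext i j
  simp only [shiftM, Matrix.mul_apply, Matrix.of_apply]
  rw [Finset.sum_eq_single (⟨((i : ℕ) + r) % m, Nat.mod_lt _ mpos⟩ : Fin m)]
  · have h2 : (((i : ℕ) + r) % m + s) % m = ((i : ℕ) + (r + s)) % m := by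
      rw [Nat.mod_add_mod, Nat.add_assoc]
    simp only [h2]
    split_ifs <;> simp
  · intro l _ hl
    rw [if_neg (fun h => hl (Fin.ext h)), zero_mul]
  · intro h; exact absurd (Finset.mem_univ _) h

lemma shiftM_congr {r : ℕ} {f g : Fin m → ℂ} (h : ∀ i, f i = g i) :
    shiftM m r f = shiftM m r g := by
  ext i j; simp only [shiftM, Matrix.of_apply, h]

lemma shiftM_diag {k : ℕ} (hk : m ∣ k) (f : Fin m → ℂ) :
    shiftM m k f = Matrix.diagonal f := by
  obtain ⟨c, rfl⟩ := hk
  ext i j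
  simp only [shiftM, Matrix.of_apply, Matrix.diagonal_apply]
  have : ((i : ℕ) + m * c) % m = (i : ℕ) := by
    rw [Nat.add_mul_mod_self_left, Nat.mod_eq_of_lt i.isLt]
  rw [this]
  by_cases h : j = i
  · subst h; rw [if_pos rfl, if_pos rfl]
  · rw [if_neg (fun hh => h (Fin.ext hh)), if_neg (Ne.symm h)]

lemma shiftM_zero_eq_one : shiftM m 0 (fun _ => 1) = 1 := by
  rw [shiftM_diag (dvd_zero m), Matrix.diagonal_one]

lemma diagonal_mul_shiftM (q : Fin m → ℂ) (r : ℕ) (f : Fin m → ℂ) :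
    Matrix.diagonal q * shiftM m r f = shiftM m r (fun i => q i * f i) := by
  ext i j
  simp only [shiftM, Matrix.of_apply, Matrix.diagonal_mul, Matrix.of_apply]
  rw [mul_ite, mul_zero]

lemma smul_shiftM (c : ℂ) (r : ℕ) (f : Fin m → ℂ) :
    c • shiftM m r f = shiftM m r (fun i => c * f i) := by
  ext i j
  simp only [shiftM, Matrix.smul_apply, Matrix.of_apply, smul_eq_mul]
  split_ifs <;> simp

lemma shiftM_pow (r : ℕ) (f : Fin m → ℂ) (k : ℕ) :
    (shiftM m r f) ^ k =
      shiftM m (k * r) (fun i => ∏ l ∈ range k, f ⟨((i : ℕ) + l * r) % m, Nat.mod_lt _ mpos⟩) := by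
  induction k with
  | zero =>
      rw [pow_zero, zero_mul, ← shiftM_zero_eq_one]
      exact (shiftM_congr (fun i => by simp)).symm
  | succ k ih =>
      rw [pow_succ, ih, shiftM_mul]
      have he : k * r + r = (k + 1) * r := by ring
      rw [he]
      refine shiftM_congr (fun i => ?_)
      rw [Finset.prod_range_succ]

lemma tpow_step (t : ℂ) (N : ℕ) :
    t ^ (N / m) * (if N % m = m - 1 then t else 1) = t ^ ((N + 1) / m) := by
  have hm : 0 < m := mpos
  rw [Nat.succ_div]
  by_cases h : N % m = m - 1
  · have hd : m ∣ N + 1 := by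
      refine ⟨N / m + 1, ?_⟩
      have h1 := Nat.div_add_mod N m
      have h2 : m * (N / m + 1) = m * (N / m) + m := by ring
      omega
    rw [if_pos h, if_pos hd, pow_succ]
  · have hd : ¬ m ∣ N + 1 := by
      rintro ⟨c, hc⟩
      apply h
      have hc0 : 0 < c := by
        rcases Nat.eq_zero_or_pos c with h0 | h0
        · subst h0; rw [mul_zero] at hc; omega
        · exact h0
      have h1 : m * c = m * (c - 1) + m := by
        conv_lhs => rw [show c = (c - 1) + 1 by omega]
        ring
      have hN : N = m * (c - 1) + (m - 1) := by omega
      rw [hN, Nat.mul_add_mod]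
      exact Nat.mod_eq_of_lt (by omega)
    rw [if_neg h, if_neg hd, mul_one, add_zero]

lemma prod_shift_zero {r : ℕ} (hc : Nat.Coprime r m) {f : Fin m → ℂ} {i₀ : Fin m}
    (h0 : f i₀ = 0) (i : Fin m) :
    ∏ l ∈ range m, f ⟨((i : ℕ) + l * r) % m, Nat.mod_lt _ mpos⟩ = 0 := by
  set u := ZMod.unitOfCoprime r hc with huu
  have hu : (↑u : ZMod m) = (r : ℕ) := ZMod.coe_unitOfCoprime r hc
  set l' : ZMod m := ((((i₀ : ℕ) : ZMod m)) - (((i : ℕ) : ZMod m))) * (↑u⁻¹ : ZMod m) with hl'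
  refine Finset.prod_eq_zero (Finset.mem_range.mpr (ZMod.val_lt l')) ?_
  have key : ((i : ℕ) + l'.val * r) % m = (i₀ : ℕ) := by
    have hcast : ((((i : ℕ) + l'.val * r) : ℕ) : ZMod m) = ((i₀ : ℕ) : ZMod m) := by
      push_cast
      rw [ZMod.natCast_rightInverse l', ← hu, hl', mul_assoc, ← Units.val_mul, inv_mul_cancel, Units.val_one, mul_one]
      ring
    calc ((i : ℕ) + l'.val * r) % m
        = ((((i : ℕ) + l'.val * r : ℕ)) : ZMod m).val := (ZMod.val_natCast _ _).symm
      _ = (((i₀ : ℕ) : ZMod m)).val := by rw [hcast]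
      _ = (i₀ : ℕ) := by rw [ZMod.val_natCast, Nat.mod_eq_of_lt i₀.isLt]
  have heq : (⟨((i : ℕ) + l'.val * r) % m, Nat.mod_lt _ mpos⟩ : Fin m) = i₀ := Fin.ext key
  rw [heq]; exact h0


lemma shiftM_zero_fun (k : ℕ) : shiftM m k (fun _ => (0:ℂ)) = 0 := by
  ext i j; simp [shiftM]

end Stmt12Aux

open Stmt12Aux

set_option maxHeartbeats 2000000 in
/-- The columns of `K` form a basis of the kernel of the boundary map `∂₁` of the
twisted chain complex of `X_{T(m,n)}`. -/
theorem stmt_12 (m n : ℕ) (hm : 1 < m) (hn : 1 < n) (hmn : Nat.Coprime m n)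
    (t : ℂ) (ht0 : t ≠ 0) (htn : t ^ n ≠ 1)
    (b : Fin m → ℤ) (hb : (n : ℤ) ∣ ∑ i, b i)
    (a : ℤ) (ha : ¬ (n : ℤ) ∣ a)
    (C X Y P V W : Matrix (Fin m) (Fin m) ℂ)
    (hC : ∀ i j : Fin m, C i j =
      if (i : ℕ) + 1 = (j : ℕ) then 1
      else if (i : ℕ) = m - 1 ∧ (j : ℕ) = 0 then t else 0)
    (hX : X = C ^ n)
    (hY : Y = t • Matrix.diagonal
      (fun i => Complex.exp (2 * (Real.pi : ℂ) * Complex.I * (b i : ℂ) / (n : ℂ))))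
    (hP : P = Matrix.diagonal (fun i => if (n : ℤ) ∣ (b i + a) then 0 else 1))
    (hV : V = (1 - P * Y⁻¹)⁻¹)
    (hW : W = (1 - (1 - P) * X⁻¹)⁻¹)
    (K : Matrix (Fin m ⊕ Fin m) (Fin m) ℂ)
    (hK : K = Matrix.fromRows
      ((t ^ (-(n : ℤ)) • ((∑ i ∈ Finset.range m, X ^ i) * X)) * (1 - P) + W * P)
      ((-(t ^ (-(n : ℤ))) • ((∑ i ∈ Finset.range n, Y ^ i) * Y)) * (1 - P) -
        V * (1 - X⁻¹) * W * P))
    (D1 : Matrix (Fin m) (Fin m ⊕ Fin m) ℂ)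
    (hD1 : D1 = Matrix.fromCols (1 - X⁻¹) (1 - Y⁻¹)) :
    Function.Injective K.mulVecLin ∧
    LinearMap.range K.mulVecLin = LinearMap.ker D1.mulVecLin := by
  haveI : NeZero m := ⟨by omega⟩
  have hm0 : 0 < m := by omega
  have hn0 : 0 < n := by omega
  have htn0 : (t : ℂ) ^ n ≠ 0 := pow_ne_zero _ ht0
  set ti : ℂ := (t ^ n)⁻¹ with hti'
  have hti : t ^ (-(n : ℤ)) = ti := by rw [_root_.zpow_neg, zpow_natCast]
  have htit : ti * t ^ n = 1 := inv_mul_cancel₀ htn0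
  -- ============ X side ============
  set c1 : Fin m → ℂ := fun i => if (i : ℕ) = m - 1 then t else 1 with hc1
  have hCs : C = shiftM m 1 c1 := by
    ext i j
    have hjlt := j.isLt
    rw [hC i j]
    simp only [shiftM, Matrix.of_apply, hc1]
    by_cases him : (i : ℕ) = m - 1
    · have h1 : ((i : ℕ) + 1) % m = 0 := by
        rw [show (i : ℕ) + 1 = m by omega, Nat.mod_self]
      rw [if_neg (by omega), h1]
      by_cases hj : (j : ℕ) = 0
      · rw [if_pos ⟨him, hj⟩, if_pos hj, if_pos him]
      · rw [if_neg (by tauto), if_neg hj]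
    · have h1 : ((i : ℕ) + 1) % m = (i : ℕ) + 1 := Nat.mod_eq_of_lt (by omega)
      rw [h1]
      by_cases hj : (i : ℕ) + 1 = (j : ℕ)
      · rw [if_pos hj, if_pos hj.symm, if_neg him]
      · rw [if_neg hj, if_neg (fun hh : _ ∧ _ => him hh.1), if_neg (fun hh => hj hh.symm)]
  have hCk : ∀ k : ℕ, C ^ k = shiftM m k (fun i => t ^ (((i : ℕ) + k) / m)) := by
    intro k
    induction k with
    | zero =>
        rw [pow_zero, ← shiftM_zero_eq_one]
        exact (shiftM_congr (fun i => by
          rw [Nat.add_zero, Nat.div_eq_of_lt i.isLt, pow_zero])).symm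
    | succ k ih =>
        rw [pow_succ, ih, hCs, shiftM_mul]
        refine shiftM_congr (fun i => ?_)
        have hstep := tpow_step (m := m) t ((i : ℕ) + k)
        simp only [hc1]
        rw [show (i : ℕ) + (k + 1) = ((i : ℕ) + k) + 1 from by ring]
        exact hstep
  have hXs : X = shiftM m n (fun i => t ^ (((i : ℕ) + n) / m)) := by rw [hX, hCk]
  have hXm : X ^ m = (t ^ n) • (1 : Matrix (Fin m) (Fin m) ℂ) := by
    rw [hX, ← pow_mul, hCk (n * m), shiftM_diag ⟨n, mul_comm n m⟩]
    have hdd : ∀ i : Fin m, ((i : ℕ) + n * m) / m = n := fun i => by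
      rw [Nat.add_mul_div_right _ _ hm0, Nat.div_eq_of_lt i.isLt, zero_add]
    rw [diag_congr (fun i => by rw [hdd i]), diagonal_const]
  have hXXinv : X * (ti • X ^ (m - 1)) = 1 := by
    rw [Matrix.mul_smul, ← pow_succ', show m - 1 + 1 = m by omega, hXm, smul_smul, htit,
      one_smul]
  have hXinvX : (ti • X ^ (m - 1)) * X = 1 := by
    rw [Matrix.smul_mul, ← pow_succ, show m - 1 + 1 = m by omega, hXm, smul_smul, htit,
      one_smul]
  have hXinv : X⁻¹ = ti • X ^ (m - 1) := Matrix.inv_eq_right_inv hXXinv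
  have hXiX : X⁻¹ * X = 1 := by rw [hXinv]; exact hXinvX
  have hXXi : X * X⁻¹ = 1 := by rw [hXinv]; exact hXXinv
  set rr : ℕ := n * (m - 1) with hrr
  have hXinvs : X⁻¹ = shiftM m rr (fun i => ti * t ^ (((i : ℕ) + rr) / m)) := by
    rw [hXinv, hX, ← pow_mul, hCk rr, smul_shiftM]
  -- ============ P / Q ============
  set p : Fin m → ℂ := fun i => if (n : ℤ) ∣ (b i + a) then 0 else 1 with hp
  set q : Fin m → ℂ := fun i => 1 - p i with hq
  have hQ : (1 : Matrix (Fin m) (Fin m) ℂ) - P = Matrix.diagonal q := by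
    rw [hP, ← Matrix.diagonal_one, ← Matrix.diagonal_sub]
  have hex : ∃ i₀ : Fin m, ¬ (n : ℤ) ∣ (b i₀ + a) := by
    by_contra hcon
    push_neg at hcon
    have hdvd : (n : ℤ) ∣ ∑ i, (b i + a) := Finset.dvd_sum (fun i _ => hcon i)
    rw [Finset.sum_add_distrib, Finset.sum_const, Finset.card_univ, Fintype.card_fin,
      nsmul_eq_mul] at hdvd
    have h2 : (n : ℤ) ∣ (m : ℤ) * a := (dvd_add_right hb).mp hdvd
    have hcop : IsCoprime (n : ℤ) (m : ℤ) := by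
      rw [Int.isCoprime_iff_gcd_eq_one, Int.gcd_natCast_natCast]
      exact hmn.symm
    exact ha (hcop.dvd_of_dvd_mul_left h2)
  -- ============ Y side ============
  set ζ : Fin m → ℂ := fun i => Complex.exp (2 * (Real.pi : ℂ) * Complex.I * (b i : ℂ) / (n : ℂ)) with hζ
  set z : Fin m → ℂ := fun i => t * ζ i with hz
  have hζn : ∀ i, ζ i ^ n = 1 := by
    intro i
    rw [hζ]
    rw [← Complex.exp_nat_mul]
    have hne : ((n : ℕ) : ℂ) ≠ 0 := Nat.cast_ne_zero.mpr (by omega)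
    rw [show ((n : ℕ) : ℂ) * (2 * (Real.pi : ℂ) * Complex.I * (b i : ℂ) / (n : ℂ)) =
        (b i : ℂ) * (2 * (Real.pi : ℂ) * Complex.I) from by field_simp]
    exact Complex.exp_int_mul_two_pi_mul_I (b i)
  have hz0 : ∀ i, z i ≠ 0 := fun i => mul_ne_zero ht0 (Complex.exp_ne_zero _)
  have hzn : ∀ i, z i ^ n = t ^ n := fun i => by rw [hz]; rw [mul_pow, hζn, mul_one]
  have hz1 : ∀ i, z i ≠ 1 := fun i h => htn (by rw [← hzn i, h, one_pow])
  have hY' : Y = Matrix.diagonal z := by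
    rw [hY, smul_diag]
  have hYinv : Y⁻¹ = Matrix.diagonal (fun i => (z i)⁻¹) := by
    apply Matrix.inv_eq_right_inv
    rw [hY', Matrix.diagonal_mul_diagonal,
      diag_congr (fun i => mul_inv_cancel₀ (hz0 i)), Matrix.diagonal_one]
  have hYiY : Y⁻¹ * Y = 1 := by
    rw [hYinv, hY', Matrix.diagonal_mul_diagonal,
      diag_congr (fun i => inv_mul_cancel₀ (hz0 i)), Matrix.diagonal_one]
  have hYn : Y ^ n = (t ^ n) • (1 : Matrix (Fin m) (Fin m) ℂ) := by
    rw [hY', Matrix.diagonal_pow,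
      show z ^ n = fun _ : Fin m => t ^ n from funext fun i => by rw [Pi.pow_apply, hzn i],
      diagonal_const]
  have hSY : (∑ k ∈ Finset.range n, Y ^ k) =
      Matrix.diagonal (fun i => ∑ k ∈ Finset.range n, z i ^ k) := by
    rw [hY']
    ext i j
    rw [Matrix.sum_apply]
    by_cases h : i = j
    · subst h
      simp only [Matrix.diagonal_pow, Matrix.diagonal_apply_eq, Pi.pow_apply]
    · simp only [Matrix.diagonal_pow, Matrix.diagonal_apply_ne _ h, Pi.pow_apply]
      simp [Matrix.diagonal_apply_ne _ h]
  have hSYY : (∑ k ∈ Finset.range n, Y ^ k) * Y =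
      Matrix.diagonal (fun i => (∑ k ∈ Finset.range n, z i ^ k) * z i) := by
    rw [hSY, hY', Matrix.diagonal_mul_diagonal]
  -- ============ V ============
  set e : Fin m → ℂ := fun i => 1 - p i * (z i)⁻¹ with he
  have hM1 : (1 : Matrix (Fin m) (Fin m) ℂ) - P * Y⁻¹ = Matrix.diagonal e := by
    rw [hP, hYinv, Matrix.diagonal_mul_diagonal, ← Matrix.diagonal_one, ← Matrix.diagonal_sub]
  have he0 : ∀ i, e i ≠ 0 := by
    intro i
    rw [he]
    by_cases hdv : (n : ℤ) ∣ (b i + a)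
    · simp [hp, hdv]
    · simp only [hp, if_neg hdv, one_mul]
      intro hcon
      apply hz1 i
      rw [← inv_eq_one]
      linear_combination -hcon
  have hV' : V = Matrix.diagonal (fun i => (e i)⁻¹) := by
    rw [hV, hM1]
    apply Matrix.inv_eq_right_inv
    rw [Matrix.diagonal_mul_diagonal, diag_congr (fun i => mul_inv_cancel₀ (he0 i)),
      Matrix.diagonal_one]
  have hM1V : ((1 : Matrix (Fin m) (Fin m) ℂ) - P * Y⁻¹) * V = 1 := by
    rw [hM1, hV', Matrix.diagonal_mul_diagonal, diag_congr (fun i => mul_inv_cancel₀ (he0 i)),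
      Matrix.diagonal_one]
  have hQV : ((1 : Matrix (Fin m) (Fin m) ℂ) - P) * V = 1 - P := by
    rw [hQ, hV', Matrix.diagonal_mul_diagonal]
    refine diag_congr fun i => ?_
    by_cases hdv : (n : ℤ) ∣ (b i + a)
    · have hei : e i = 1 := by simp [he, hp, hdv]
      simp [hq, hp, hdv, hei]
    · simp [hq, hp, hdv]
  have hQP : ((1 : Matrix (Fin m) (Fin m) ℂ) - P) * P = 0 := by
    rw [hQ, hP, Matrix.diagonal_mul_diagonal]
    rw [diag_congr (fun i => ?_), Matrix.diagonal_zero]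
    by_cases hdv : (n : ℤ) ∣ (b i + a) <;> simp [hq, hp, hdv]
  have hQYinv : ((1 : Matrix (Fin m) (Fin m) ℂ) - P) * Y⁻¹ = Y⁻¹ * (1 - P) := by
    rw [hQ, hYinv, diag_comm]
  have hQSYY : ((1 : Matrix (Fin m) (Fin m) ℂ) - P) * ((∑ k ∈ Finset.range n, Y ^ k) * Y) =
      ((∑ k ∈ Finset.range n, Y ^ k) * Y) * (1 - P) := by
    rw [hQ, hSYY, diag_comm]
  -- ============ D ============
  set d : Fin m → ℂ :=
    fun i => (1 - ti) - ti * ((∑ k ∈ Finset.range n, z i ^ k) * z i) with hd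
  have hDdiag : (1 - ti) • (1 : Matrix (Fin m) (Fin m) ℂ) -
      ti • ((∑ k ∈ Finset.range n, Y ^ k) * Y) = Matrix.diagonal d := by
    rw [hSYY]
    ext i j
    by_cases hij : i = j
    · subst hij
      simp only [Matrix.sub_apply, Matrix.smul_apply, Matrix.one_apply_eq,
        Matrix.diagonal_apply_eq, smul_eq_mul, hd, mul_one]
    · simp [Matrix.sub_apply, Matrix.smul_apply, Matrix.one_apply_ne hij,
        Matrix.diagonal_apply_ne _ hij]
  have hd0 : ∀ i, d i ≠ 0 := by
    intro i hcon
    have hz1' : z i - 1 ≠ 0 := sub_ne_zero.mpr (hz1 i)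
    simp only [hd] at hcon
    rw [geom_sum_eq (hz1 i), hzn i, hti'] at hcon
    field_simp at hcon
    have h2 : (t ^ n - 1) * t ^ n = 0 := by linear_combination (-t ^ n) * hcon
    rcases mul_eq_zero.mp h2 with h3 | h3
    · exact htn (by linear_combination h3)
    · exact htn0 h3
  have hDinvD : Matrix.diagonal (fun i => (d i)⁻¹) * Matrix.diagonal d = 1 := by
    rw [Matrix.diagonal_mul_diagonal, diag_congr (fun i => inv_mul_cancel₀ (hd0 i)),
      Matrix.diagonal_one]
  -- ============ W ============
  set N : Matrix (Fin m) (Fin m) ℂ := (1 - P) * X⁻¹ with hNdef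
  have hNs : N = shiftM m rr (fun i => q i * (ti * t ^ (((i : ℕ) + rr) / m))) := by
    rw [hNdef, hQ, hXinvs, diagonal_mul_shiftM]
  have hcoprr : Nat.Coprime rr m := by
    have h2 : Nat.Coprime (m - 1) m := by
      have h3 : Nat.gcd (m - 1) m ∣ 1 := by
        have hd2 := Nat.gcd_dvd_right (m - 1) m
        have hd1 := Nat.gcd_dvd_left (m - 1) m
        simpa [show m - (m - 1) = 1 by omega] using Nat.dvd_sub hd2 hd1
      exact Nat.dvd_one.mp h3
    exact Nat.Coprime.mul hmn.symm h2
  have hNm : N ^ m = 0 := by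
    obtain ⟨i₀, hi₀⟩ := hex
    rw [hNs, shiftM_pow]
    have h0 : q i₀ * (ti * t ^ (((i₀ : ℕ) + rr) / m)) = 0 := by
      simp [hq, hp, hi₀]
    rw [shiftM_congr (fun i =>
      prod_shift_zero (f := fun i => q i * (ti * t ^ (((i : ℕ) + rr) / m))) hcoprr h0 i),
      shiftM_zero_fun]
  have hEgeom : ((1 : Matrix (Fin m) (Fin m) ℂ) - N) * (∑ k ∈ Finset.range m, N ^ k) = 1 := by
    have h2 := mul_geom_sum N m
    rw [hNm] at h2
    rw [← neg_sub N 1, neg_mul, h2, zero_sub, neg_neg]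
  have hgeomE : (∑ k ∈ Finset.range m, N ^ k) * ((1 : Matrix (Fin m) (Fin m) ℂ) - N) = 1 := by
    have h2 := geom_sum_mul N m
    rw [hNm] at h2
    rw [← neg_sub N 1, mul_neg, h2, zero_sub, neg_neg]
  have hW' : W = ∑ k ∈ Finset.range m, N ^ k := by
    rw [hW]
    exact Matrix.inv_eq_right_inv hEgeom
  have hEW : ((1 : Matrix (Fin m) (Fin m) ℂ) - (1 - P) * X⁻¹) * W = 1 := by
    rw [hW', ← hNdef]; exact hEgeom
  have hWE : W * ((1 : Matrix (Fin m) (Fin m) ℂ) - (1 - P) * X⁻¹) = 1 := by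
    rw [hW', ← hNdef]; exact hgeomE
  -- ============ key algebraic identities ============
  rw [hti] at hK
  have hQQ : ((1 : Matrix (Fin m) (Fin m) ℂ) - P) * (1 - P) = 1 - P := by
    rw [hQ, Matrix.diagonal_mul_diagonal]
    refine diag_congr fun i => ?_
    by_cases hdv : (n : ℤ) ∣ (b i + a) <;> simp [hq, hp, hdv]
  have hSXX : X⁻¹ * ((∑ k ∈ Finset.range m, X ^ k) * X) = ∑ k ∈ Finset.range m, X ^ k := by
    have hcomm : (∑ k ∈ Finset.range m, X ^ k) * X = X * ∑ k ∈ Finset.range m, X ^ k := by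
      rw [Finset.sum_mul, Finset.mul_sum]
      exact Finset.sum_congr rfl fun k _ => ((Commute.refl X).pow_left k).eq
    rw [hcomm, ← mul_assoc, hXiX, one_mul]
  have hSYY2 : Y⁻¹ * ((∑ k ∈ Finset.range n, Y ^ k) * Y) = ∑ k ∈ Finset.range n, Y ^ k := by
    have hcomm : (∑ k ∈ Finset.range n, Y ^ k) * Y = Y * ∑ k ∈ Finset.range n, Y ^ k := by
      rw [Finset.sum_mul, Finset.mul_sum]
      exact Finset.sum_congr rfl fun k _ => ((Commute.refl Y).pow_left k).eq
    rw [hcomm, ← mul_assoc, hYiY, one_mul]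
  have k1 : ((1 : Matrix (Fin m) (Fin m) ℂ) - X⁻¹) *
      (ti • ((∑ k ∈ Finset.range m, X ^ k) * X)) = (1 - ti) • 1 := by
    rw [Matrix.mul_smul, sub_mul, one_mul, hSXX]
    have hgeo : (∑ k ∈ Finset.range m, X ^ k) * X - (∑ k ∈ Finset.range m, X ^ k)
        = X ^ m - 1 := by
      have h2 := geom_sum_mul X m
      rw [mul_sub, mul_one] at h2
      exact h2
    rw [hgeo, hXm, smul_sub, smul_smul, htit, sub_smul]
  have k2 : ((1 : Matrix (Fin m) (Fin m) ℂ) - Y⁻¹) *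
      (ti • ((∑ k ∈ Finset.range n, Y ^ k) * Y)) = (1 - ti) • 1 := by
    rw [Matrix.mul_smul, sub_mul, one_mul, hSYY2]
    have hgeo : (∑ k ∈ Finset.range n, Y ^ k) * Y - (∑ k ∈ Finset.range n, Y ^ k)
        = Y ^ n - 1 := by
      have h2 := geom_sum_mul Y n
      rw [mul_sub, mul_one] at h2
      exact h2
    rw [hgeo, hYn, smul_sub, smul_smul, htit, sub_smul]
  have k3 : ((1 : Matrix (Fin m) (Fin m) ℂ) - Y⁻¹) * V = 1 - Y⁻¹ * (1 - P) := by
    have hsplit : (1 : Matrix (Fin m) (Fin m) ℂ) - Y⁻¹ = (1 - P * Y⁻¹) - (1 - P) * Y⁻¹ := by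
      noncomm_ring
    rw [hsplit, sub_mul, hM1V, hQYinv, mul_assoc, hQV]
  have k4 : ((1 : Matrix (Fin m) (Fin m) ℂ) - X⁻¹) * W = 1 - P * (X⁻¹ * W) := by
    have hsplit : (1 : Matrix (Fin m) (Fin m) ℂ) - X⁻¹ = (1 - (1 - P) * X⁻¹) - P * X⁻¹ := by
      noncomm_ring
    rw [hsplit, sub_mul, hEW, mul_assoc]
  have hPP : P * P = P := by
    rw [hP, Matrix.diagonal_mul_diagonal]
    refine diag_congr fun i => ?_
    by_cases hdv : (n : ℤ) ∣ (b i + a) <;> simp [hp, hdv]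
  have k5 : ((1 : Matrix (Fin m) (Fin m) ℂ) - P) * ((1 - X⁻¹) * (W * P)) = 0 := by
    rw [← mul_assoc (1 - X⁻¹) W P, k4, sub_mul, one_mul]
    have hG : P * ((1 - P * (X⁻¹ * W)) * P) = (1 - P * (X⁻¹ * W)) * P := by
      rw [sub_mul, one_mul, mul_sub, hPP, ← mul_assoc P (P * (X⁻¹ * W)) P,
        ← mul_assoc P P (X⁻¹ * W), hPP]
    rw [hG, sub_self]
  -- ============ identity 1 : D1 * K = 0 ============
  have hT1 : ((1 : Matrix (Fin m) (Fin m) ℂ) - X⁻¹) *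
      ((ti • ((∑ k ∈ Finset.range m, X ^ k) * X)) * (1 - P) + W * P)
      = ((1 - ti) • (1 : Matrix (Fin m) (Fin m) ℂ)) * (1 - P) + (1 - X⁻¹) * (W * P) := by
    rw [mul_add ((1 : Matrix (Fin m) (Fin m) ℂ) - X⁻¹)
        ((ti • ((∑ k ∈ Finset.range m, X ^ k) * X)) * (1 - P)) (W * P),
      ← mul_assoc ((1 : Matrix (Fin m) (Fin m) ℂ) - X⁻¹)
        (ti • ((∑ k ∈ Finset.range m, X ^ k) * X)) (1 - P), k1]
  have hT2 : ((1 : Matrix (Fin m) (Fin m) ℂ) - Y⁻¹) *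
      (((-ti) • ((∑ k ∈ Finset.range n, Y ^ k) * Y)) * (1 - P) - V * (1 - X⁻¹) * W * P)
      = -(((1 - ti) • (1 : Matrix (Fin m) (Fin m) ℂ)) * (1 - P)) - (1 - X⁻¹) * (W * P) := by
    have hT2a : ((1 : Matrix (Fin m) (Fin m) ℂ) - Y⁻¹) *
        (((-ti) • ((∑ k ∈ Finset.range n, Y ^ k) * Y)) * (1 - P))
        = -(((1 - ti) • (1 : Matrix (Fin m) (Fin m) ℂ)) * (1 - P)) := by
      rw [← mul_assoc ((1 : Matrix (Fin m) (Fin m) ℂ) - Y⁻¹)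
          ((-ti) • ((∑ k ∈ Finset.range n, Y ^ k) * Y)) (1 - P), neg_smul, mul_neg, k2, neg_mul]
    have hT2b : ((1 : Matrix (Fin m) (Fin m) ℂ) - Y⁻¹) * (V * (1 - X⁻¹) * W * P)
        = (1 - X⁻¹) * (W * P) := by
      rw [mul_assoc (V * (1 - X⁻¹)) W P, mul_assoc V (1 - X⁻¹) (W * P),
        ← mul_assoc (1 - Y⁻¹) V ((1 - X⁻¹) * (W * P)), k3, sub_mul, one_mul,
        mul_assoc Y⁻¹ (1 - P) ((1 - X⁻¹) * (W * P)), k5, mul_zero, sub_zero]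
    rw [mul_sub, hT2a, hT2b]
  have id1 : ((1 : Matrix (Fin m) (Fin m) ℂ) - X⁻¹) *
      ((ti • ((∑ k ∈ Finset.range m, X ^ k) * X)) * (1 - P) + W * P)
      + ((1 : Matrix (Fin m) (Fin m) ℂ) - Y⁻¹) *
      (((-ti) • ((∑ k ∈ Finset.range n, Y ^ k) * Y)) * (1 - P) - V * (1 - X⁻¹) * W * P)
      = 0 := by
    rw [hT1, hT2]
    abel
  -- ============ abbreviations ============
  set A : Matrix (Fin m) (Fin m) ℂ :=
    (ti • ((∑ k ∈ Finset.range m, X ^ k) * X)) * (1 - P) + W * P with hA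
  set B : Matrix (Fin m) (Fin m) ℂ :=
    ((-ti) • ((∑ k ∈ Finset.range n, Y ^ k) * Y)) * (1 - P) - V * (1 - X⁻¹) * W * P with hB
  set Dg : Matrix (Fin m) (Fin m) ℂ := Matrix.diagonal (fun i => (d i)⁻¹) with hDg
  set EE : Matrix (Fin m) (Fin m) ℂ := 1 - (1 - P) * X⁻¹ with hEE
  set SXXt : Matrix (Fin m) (Fin m) ℂ := ti • ((∑ k ∈ Finset.range m, X ^ k) * X) with hSXXt
  set F1 : Matrix (Fin m) (Fin m) ℂ := Dg * ((1 - P) * (V * (1 - X⁻¹))) with hF1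
  set F2 : Matrix (Fin m) (Fin m) ℂ := Dg * (1 - P) with hF2
  -- ============ identity 2 : left inverse ============
  have c1 : V * (((1 : Matrix (Fin m) (Fin m) ℂ) - X⁻¹) * A) + B
      = (1 - ti) • (V * (1 - P)) + (-ti) • (((∑ k ∈ Finset.range n, Y ^ k) * Y) * (1 - P)) := by
    rw [hT1, hB, mul_add V, Matrix.smul_mul (1 - ti), one_mul, Matrix.mul_smul V,
      Matrix.smul_mul (-ti), mul_assoc (V * (1 - X⁻¹)) W P, mul_assoc V (1 - X⁻¹) (W * P)]
    abel
  have c2 : ((1 : Matrix (Fin m) (Fin m) ℂ) - P) *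
      ((1 - ti) • (V * (1 - P)) + (-ti) • (((∑ k ∈ Finset.range n, Y ^ k) * Y) * (1 - P)))
      = Matrix.diagonal d * (1 - P) := by
    rw [mul_add, Matrix.mul_smul, Matrix.mul_smul,
      ← mul_assoc (1 - P) V (1 - P), hQV, hQQ,
      ← mul_assoc (1 - P) ((∑ k ∈ Finset.range n, Y ^ k) * Y) (1 - P), hQSYY,
      mul_assoc ((∑ k ∈ Finset.range n, Y ^ k) * Y) (1 - P) (1 - P), hQQ,
      ← hDdiag, sub_mul, Matrix.smul_mul, one_mul, Matrix.smul_mul, neg_smul]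
    abel
  have c3 : F1 * A + F2 * B = 1 - P := by
    rw [hF1, hF2,
      mul_assoc Dg ((1 - P) * (V * (1 - X⁻¹))) A,
      mul_assoc ((1 : Matrix (Fin m) (Fin m) ℂ) - P) (V * (1 - X⁻¹)) A,
      mul_assoc V (1 - X⁻¹) A,
      mul_assoc Dg (1 - P) B,
      ← mul_add Dg,
      ← mul_add ((1 : Matrix (Fin m) (Fin m) ℂ) - P),
      c1, c2, ← mul_assoc Dg (Matrix.diagonal d) (1 - P), hDg, hDinvD, one_mul]
  have c4 : EE * (A - SXXt * (1 - P)) = P := by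
    have h1 : A - SXXt * (1 - P) = W * P := by
      rw [hA]
      exact add_sub_cancel_left _ _
    rw [h1, hEE, ← mul_assoc, hEW, one_mul]
  clear_value A B Dg EE SXXt F1 F2
  have id2 : (F1 + EE - EE * (SXXt * F1)) * A + (F2 - EE * (SXXt * F2)) * B = 1 := by
    have e1 : (F1 + EE - EE * (SXXt * F1)) * A = F1 * A + EE * A - EE * (SXXt * (F1 * A)) := by
      rw [sub_mul, add_mul, mul_assoc EE (SXXt * F1) A, mul_assoc SXXt F1 A]
    have e2 : (F2 - EE * (SXXt * F2)) * B = F2 * B - EE * (SXXt * (F2 * B)) := by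
      rw [sub_mul, mul_assoc EE (SXXt * F2) B, mul_assoc SXXt F2 B]
    rw [e1, e2]
    have e3 : F1 * A + EE * A - EE * (SXXt * (F1 * A)) + (F2 * B - EE * (SXXt * (F2 * B)))
        = (F1 * A + F2 * B) + EE * A - EE * (SXXt * (F1 * A) + SXXt * (F2 * B)) := by
      rw [mul_add EE]; abel
    rw [e3, ← mul_add SXXt, c3, add_sub_assoc, ← mul_sub EE, c4, sub_add_cancel]
  -- ============ glue ============
  have hLK : Matrix.fromCols (F1 + EE - EE * (SXXt * F1)) (F2 - EE * (SXXt * F2)) * K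
      = 1 := by
    rw [hK, Matrix.fromCols_mul_fromRows, id2]
  have hD1K : D1 * K = 0 := by
    rw [hD1, hK, Matrix.fromCols_mul_fromRows, id1]
  have h1Ydiag : (1 : Matrix (Fin m) (Fin m) ℂ) - Y⁻¹
      = Matrix.diagonal (fun i => 1 - (z i)⁻¹) := by
    rw [hYinv, ← Matrix.diagonal_one, ← Matrix.diagonal_sub]
  have hz1inv : ∀ i, 1 - (z i)⁻¹ ≠ 0 := by
    intro i hcon
    apply hz1 i
    rw [← inv_eq_one]
    linear_combination -hcon
  have hD1R : D1 * Matrix.fromRows (0 : Matrix (Fin m) (Fin m) ℂ)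
      (Matrix.diagonal fun i => (1 - (z i)⁻¹)⁻¹) = 1 := by
    rw [hD1, Matrix.fromCols_mul_fromRows, mul_zero, zero_add, h1Ydiag,
      Matrix.diagonal_mul_diagonal, diag_congr (fun i => mul_inv_cancel₀ (hz1inv i)),
      Matrix.diagonal_one]
  have hinj : Function.Injective K.mulVecLin := by
    have hleft : ∀ v : Fin m → ℂ,
        (Matrix.fromCols (F1 + EE - EE * (SXXt * F1))
          (F2 - EE * (SXXt * F2))).mulVecLin (K.mulVecLin v) = v := by
      intro v
      rw [← LinearMap.comp_apply, ← Matrix.mulVecLin_mul, hLK, Matrix.mulVecLin_one,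
        LinearMap.id_apply]
    exact Function.LeftInverse.injective hleft
  refine ⟨hinj, ?_⟩
  have hle : LinearMap.range K.mulVecLin ≤ LinearMap.ker D1.mulVecLin := by
    rintro x ⟨v, rfl⟩
    rw [LinearMap.mem_ker, ← LinearMap.comp_apply, ← Matrix.mulVecLin_mul, hD1K]
    simp
  have hsurj : Function.Surjective D1.mulVecLin := by
    intro w
    refine ⟨(Matrix.fromRows (0 : Matrix (Fin m) (Fin m) ℂ)
      (Matrix.diagonal fun i => (1 - (z i)⁻¹)⁻¹)).mulVecLin w, ?_⟩
    rw [← LinearMap.comp_apply, ← Matrix.mulVecLin_mul, hD1R, Matrix.mulVecLin_one,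
      LinearMap.id_apply]
  have hr1 : Module.finrank ℂ (LinearMap.range K.mulVecLin) = m := by
    rw [LinearMap.finrank_range_of_inj hinj, Module.finrank_fintype_fun_eq_card,
      Fintype.card_fin]
  have hr2 : Module.finrank ℂ (LinearMap.ker D1.mulVecLin) = m := by
    have h3 := LinearMap.finrank_range_add_finrank_ker D1.mulVecLin
    rw [LinearMap.range_eq_top.mpr hsurj, finrank_top, Module.finrank_fintype_fun_eq_card,
      Module.finrank_fintype_fun_eq_card, Fintype.card_fin, Fintype.card_sum,
      Fintype.card_fin] at h3
    omega
  exact Submodule.eq_of_le_of_finrank_eq hle (by rw [hr1, hr2])
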